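/- arXiv:2102.01766 — 2 statements merged into one kernel-verified Lean document; each statement's English description precedes it below -/
import Mathlib

section
/- Continuity of the split control state in the splitting parameter: Let P_A be a probability distribution with full support on a finite totally ordered set 𝒜, let |Ω⟩^{A''A'} = Σ_a √(P_A(a)) |a⟩^{A''}|ζ_a⟩^{A'}, and for θ ∈ [0,1] let U_split(θ)^{A''→A''₀A''₁} be the isometry mapping √(P_A(a))|a⟩ to Σ_{(u,v)∈f^{−1}(a)} √(P_U^θ(u) P_V^θ(v)) |u⟩^{A''₀}|v⟩^{A''₁}, where (P_U^θ, P_V^θ, f) is the explicit classical split of P_A. Let |Ω'(θ)⟩^{A''₀A''₁BE} be the state obtained by applying the Stinespring dilation U_N^{A'→BE} of a channel to U_split(θ)|Ω⟩. Then there is a constant C (depending only on P_A) such that for all θ, θ' ∈ [0,1] with |θ − θ'| ≤ δ, the purified distance satisfies P(Ω'(θ), Ω'(θ')) ≤ C√δ. -/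
noncomputable section
open scoped BigOperators
open MeasureTheory Kronecker Matrix
open scoped ComplexOrder
attribute [local instance] Classical.propDecidable

namespace QIT

variable {ι κ : Type*}

/-- A measurable-space structure on matrices, coming from the product σ-algebra. -/
instance matMeasurableSpace (m n : Type*) : MeasurableSpace (Matrix m n ℂ) :=
  (inferInstance : MeasurableSpace (m → n → ℂ))

/-- Unit vector predicate. -/
def UnitVec {ι : Type*} [Fintype ι] (v : ι → ℂ) : Prop :=
  ∑ i, Complex.normSq (v i) = 1

/-- The pure state (rank-one projector) associated to a vector. -/
def pureState {ι : Type*} (v : ι → ℂ) : Matrix ι ι ℂ :=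
  Matrix.vecMulVec v (star v)

/-- Schatten 1-norm (trace norm) of a complex square matrix, via singular values. -/
def traceNorm [Fintype ι] [DecidableEq ι] (M : Matrix ι ι ℂ) : ℝ :=
  ∑ i, Real.sqrt ((Matrix.isHermitian_conjTranspose_mul_self M).eigenvalues i)

/-- Square root of a positive semidefinite matrix (junk value `0` otherwise). -/
def psqrt [Fintype ι] [DecidableEq ι] (M : Matrix ι ι ℂ) : Matrix ι ι ℂ :=
  if h : M.PosSemidef then
    (h.1.eigenvectorUnitary : Matrix ι ι ℂ) *
      Matrix.diagonal ((↑) ∘ (Real.sqrt ·) ∘ h.1.eigenvalues) *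
      (star h.1.eigenvectorUnitary : Matrix ι ι ℂ)
  else 0

/-- Generalised fidelity of two (sub)normalised states. -/
def gFid [Fintype ι] [DecidableEq ι] (ρ σ : Matrix ι ι ℂ) : ℝ :=
  traceNorm (psqrt ρ * psqrt σ) +
    Real.sqrt ((1 - ρ.trace.re) * (1 - σ.trace.re))

/-- Purified distance. -/
def pDist [Fintype ι] [DecidableEq ι] (ρ σ : Matrix ι ι ℂ) : ℝ :=
  Real.sqrt (1 - gFid ρ σ ^ 2)

/-- Purified distance between two pure states given by vectors. -/
def pureDist {ι : Type*} [Fintype ι] (v w : ι → ℂ) : ℝ :=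
  Real.sqrt (1 - ‖∑ i, (starRingEnd ℂ) (v i) * w i‖ ^ 2)

/-- Subnormalised density operator. -/
def IsSubState [Fintype ι] (ρ : Matrix ι ι ℂ) : Prop :=
  ρ.PosSemidef ∧ ρ.trace.re ≤ 1

/-- Normalised density operator. -/
def IsState [Fintype ι] (ρ : Matrix ι ι ℂ) : Prop :=
  ρ.PosSemidef ∧ ρ.trace = 1

/-- ε-smooth conditional min-entropy `H_min^ε(A|B)_ρ` of a bipartite (sub)state,
conditioning on the second tensor factor.  Logarithms are base 2. -/
def Hmin {α β : Type*} [Fintype α] [DecidableEq α] [Fintype β] [DecidableEq β]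
    (ε : ℝ) (ρ : Matrix (α × β) (α × β) ℂ) : ℝ :=
  - Real.logb 2 (sInf {t : ℝ | ∃ ρ' : Matrix (α × β) (α × β) ℂ, ∃ σ : Matrix β β ℂ,
      IsSubState ρ' ∧ pDist ρ' ρ ≤ ε ∧ σ.PosSemidef ∧
      ((1 : Matrix α α ℂ) ⊗ₖ σ - ρ').PosSemidef ∧ t = σ.trace.re})

/-- Unconditional smooth min-entropy (one-dimensional conditioning system). -/
def Hmin0 {α : Type*} [Fintype α] [DecidableEq α] (ε : ℝ) (ρ : Matrix α α ℂ) : ℝ :=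
  Hmin ε (ρ.submatrix (fun p : α × Unit => p.1) (fun p : α × Unit => p.1))

/-- Canonical purification vector of a matrix (meaningful for PSD matrices). -/
def purifyVec [Fintype ι] [DecidableEq ι] (ρ : Matrix ι ι ℂ) : ι × ι → ℂ :=
  fun p => psqrt ρ p.1 p.2

/-- Reduced density matrix of a pure state `v` on a system relabelled by `f : kept × traced → full`. -/
def marg {F K T : Type*} [Fintype T] (f : K × T → F) (v : F → ℂ) : Matrix K K ℂ :=
  Matrix.of fun k k' => ∑ t, v (f (k, t)) * (starRingEnd ℂ) (v (f (k', t)))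

/-- Reduced density matrix of a mixed state `M` under the relabelling `f : kept × traced → full`. -/
def margM {F K T : Type*} [Fintype T] (f : K × T → F) (M : Matrix F F ℂ) : Matrix K K ℂ :=
  Matrix.of fun k k' => ∑ t, M (f (k, t)) (f (k', t))

/-- Partial trace over the first tensor factor. -/
def ptraceFst {T K : Type*} [Fintype T] (M : Matrix (T × K) (T × K) ℂ) : Matrix K K ℂ :=
  Matrix.of fun k k' => ∑ t, M (t, k) (t, k')

/-- Partial trace over the second tensor factor. -/
def ptraceSnd {K T : Type*} [Fintype T] (M : Matrix (K × T) (K × T) ℂ) : Matrix K K ℂ :=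
  Matrix.of fun k k' => ∑ t, M (k, t) (k', t)

/-- ε-smooth max-entropy `H_max^ε(A)_ρ := −H_min^ε(A|E)` of (a purification of) `ρ`. -/
def Hmax {α : Type*} [Fintype α] [DecidableEq α] (ε : ℝ) (ρ : Matrix α α ℂ) : ℝ :=
  - Hmin ε (pureState (purifyVec ρ))

/-- ε-smooth coherent min-information `I_min^ε(A>B)_ρ := H_min^ε(A|E)` evaluated on
(the A,E marginal of) a purification of `ρ^{AB}`. -/
def Imin {α β : Type*} [Fintype α] [DecidableEq α] [Fintype β] [DecidableEq β]
    (ε : ℝ) (ρ : Matrix (α × β) (α × β) ℂ) : ℝ :=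
  Hmin ε (marg (fun q : (α × (α × β)) × β => ((q.1.1, q.2), q.1.2)) (purifyVec ρ))

/-- Frobenius (Schatten 2-) norm. -/
def frobNorm {ι : Type*} [Fintype ι] (M : Matrix ι ι ℂ) : ℝ :=
  Real.sqrt (∑ i, ∑ j, ‖M i j‖ ^ 2)

/-- Real power of a Hermitian matrix through its spectral decomposition
(junk value `0` for non-Hermitian input). -/
def rpowMat [Fintype ι] [DecidableEq ι] (σ : Matrix ι ι ℂ) (r : ℝ) : Matrix ι ι ℂ :=
  if h : σ.IsHermitian then
    (h.eigenvectorUnitary : Matrix ι ι ℂ) *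
      Matrix.diagonal (fun i => ((h.eigenvalues i ^ r : ℝ) : ℂ)) *
      (h.eigenvectorUnitary : Matrix ι ι ℂ)ᴴ
  else 0

/-- ε-smooth sandwiched Rényi-2 conditional entropy `H₂^ε(A|B)_ρ`, conditioning on the
second factor. -/
def H2 {α β : Type*} [Fintype α] [DecidableEq α] [Fintype β] [DecidableEq β]
    (ε : ℝ) (ρ : Matrix (α × β) (α × β) ℂ) : ℝ :=
  -2 * Real.logb 2 (sInf {t : ℝ | ∃ ρ' : Matrix (α × β) (α × β) ℂ, ∃ σ : Matrix β β ℂ,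
      IsSubState ρ' ∧ pDist ρ' ρ ≤ ε ∧ σ.PosDef ∧ σ.trace = 1 ∧
      t = frobNorm (((1 : Matrix α α ℂ) ⊗ₖ rpowMat σ (-(1/4 : ℝ))) * ρ' *
        ((1 : Matrix α α ℂ) ⊗ₖ rpowMat σ (-(1/4 : ℝ))))})

/-- Unconditional smooth sandwiched Rényi-2 entropy. -/
def H20 {α : Type*} [Fintype α] [DecidableEq α] (ε : ℝ) (ρ : Matrix α α ℂ) : ℝ :=
  H2 ε (ρ.submatrix (fun p : α × Unit => p.1) (fun p : α × Unit => p.1))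

/-- `op^{X→Y}` : reinterpret a vector on `X ⊗ Y` as an operator from `X` to `Y`. -/
def opMat {X Y : Type*} (v : X × Y → ℂ) : Matrix Y X ℂ :=
  Matrix.of fun y x => v (x, y)

/-- Apply an operator on the first tensor factor of a vector. -/
def applyLeft {X Y R : Type*} [Fintype X] (M : Matrix Y X ℂ) (w : X × R → ℂ) : Y × R → ℂ :=
  fun p => ∑ x, M p.1 x * w (x, p.2)

/-- Linearity of a superoperator. -/
def IsLin (Φ : Matrix ι ι ℂ → Matrix κ κ ℂ) : Prop :=
  ∀ (c : ℂ) (M N : Matrix ι ι ℂ), Φ (c • M + N) = c • Φ M + Φ N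

/-- Tensor extension `Φ ⊗ id_R` of a superoperator, acting on the first factor. -/
def extAncilla (Φ : Matrix ι ι ℂ → Matrix κ κ ℂ) {R : Type*}
    (M : Matrix (ι × R) (ι × R) ℂ) : Matrix (κ × R) (κ × R) ℂ :=
  Matrix.of fun x y => Φ (Matrix.of fun a b => M (a, x.2) (b, y.2)) x.1 y.1

/-- Complete positivity. -/
def IsCP [Fintype ι] [Fintype κ] (Φ : Matrix ι ι ℂ → Matrix κ κ ℂ) : Prop :=
  ∀ (R : Type) [Fintype R], ∀ M : Matrix (ι × R) (ι × R) ℂ,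
    M.PosSemidef → (extAncilla Φ M).PosSemidef

/-- Trace preservation. -/
def IsTP [Fintype ι] [Fintype κ] (Φ : Matrix ι ι ℂ → Matrix κ κ ℂ) : Prop :=
  ∀ M : Matrix ι ι ℂ, (Φ M).trace = M.trace

/-- Quantum channel: linear, completely positive, trace preserving. -/
def IsCPTP [Fintype ι] [Fintype κ] (Φ : Matrix ι ι ℂ → Matrix κ κ ℂ) : Prop :=
  IsLin Φ ∧ IsCP Φ ∧ IsTP Φ

/-- `V` is a Stinespring dilation (with environment `E`) of the superoperator `Φ`. -/
def IsStinespring {E : Type*} [Fintype ι] [DecidableEq ι] [Fintype κ] [Fintype E]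
    (Φ : Matrix ι ι ℂ → Matrix κ κ ℂ) (V : Matrix (κ × E) ι ℂ) : Prop :=
  Vᴴ * V = 1 ∧ ∀ M : Matrix ι ι ℂ, Φ M = ptraceSnd (V * M * Vᴴ)

/-- von Neumann entropy (base 2). -/
def vN [Fintype ι] [DecidableEq ι] (ρ : Matrix ι ι ℂ) : ℝ :=
  if h : ρ.IsHermitian then -∑ i, (h.eigenvalues i) * Real.logb 2 (h.eigenvalues i) else 0

/-- Coherent information `I(A>B)_ρ = H(B) − H(AB)` of a bipartite state. -/
def cohInfo {α β : Type*} [Fintype α] [DecidableEq α] [Fintype β] [DecidableEq β]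
    (ρ : Matrix (α × β) (α × β) ℂ) : ℝ :=
  vN (ptraceFst ρ) - vN ρ

/-- (Left- and right-) invariant probability measure on the unitary group, i.e.,
the Haar probability measure. -/
def IsHaarLike {ι : Type*} [Fintype ι] [DecidableEq ι]
    (μ : Measure ↥(Matrix.unitaryGroup ι ℂ)) : Prop :=
  (∀ V : ↥(Matrix.unitaryGroup ι ℂ), Measure.map (fun U => V * U) μ = μ) ∧
  (∀ V : ↥(Matrix.unitaryGroup ι ℂ), Measure.map (fun U => U * V) μ = μ)

/-- Maximally entangled (EPR) vector of rank `m`. -/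
def mevec (m : ℕ) : Fin m × Fin m → ℂ :=
  fun p => if p.1 = p.2 then ((1 / Real.sqrt m : ℝ) : ℂ) else 0

/-- Maximally mixed state. -/
def mms (ι : Type*) [Fintype ι] [DecidableEq ι] : Matrix ι ι ℂ :=
  ((Fintype.card ι : ℂ)⁻¹) • (1 : Matrix ι ι ℂ)

end QIT

namespace QIT

/-- Cumulative distribution function `F_P(i) = Σ_{j ≤ i} P(j)` on a finite ordered set. -/
def cdf {α : Type*} [Fintype α] [LinearOrder α] (P : α → ℝ) (i : α) : ℝ :=
  ∑ j ∈ Finset.univ.filter (fun j => j ≤ i), P j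

/-- Strict cumulative distribution function `F_P(i−1) = Σ_{j < i} P(j)`. -/
def cdfLt {α : Type*} [Fintype α] [LinearOrder α] (P : α → ℝ) (i : α) : ℝ :=
  ∑ j ∈ Finset.univ.filter (fun j => j < i), P j

/-- A probability mass function on a finite set. -/
def IsPMF {α : Type*} [Fintype α] (P : α → ℝ) : Prop :=
  (∀ i, 0 ≤ P i) ∧ ∑ i, P i = 1

/-- The first split distribution `P_U^θ`, the pmf with cdf `F_U^θ(i) = θ F_A(i) + 1 − θ`. -/
def splitU {α : Type*} [Fintype α] [LinearOrder α] [OrderBot α]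
    (P : α → ℝ) (θ : ℝ) (i : α) : ℝ :=
  θ * P i + (if i = ⊥ then 1 - θ else 0)

/-- The second split distribution `P_V^θ`, the pmf with cdf `F_V^θ(i) = F_A(i)/F_U^θ(i)`. -/
def splitV {α : Type*} [Fintype α] [LinearOrder α] (P : α → ℝ) (θ : ℝ) (i : α) : ℝ :=
  cdf P i / (θ * cdf P i + 1 - θ) - cdfLt P i / (θ * cdfLt P i + 1 - θ)

end QIT


namespace SplitAux
open QIT

noncomputable def g (θ c : ℝ) : ℝ := c / (θ * c + 1 - θ)

lemma g_zero (θ : ℝ) : g θ 0 = 0 := by simp [g]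

lemma denom_ge {θ c : ℝ} (hθ0 : 0 ≤ θ) (hθ1 : θ ≤ 1) (hc : 0 ≤ c) (hc1 : c ≤ 1) :
    c ≤ θ * c + 1 - θ := by nlinarith

lemma g_nonneg {θ c : ℝ} (hθ0 : 0 ≤ θ) (hθ1 : θ ≤ 1) (hc : 0 ≤ c) : 0 ≤ g θ c := by
  apply div_nonneg hc; nlinarith

lemma g_le_one {θ c : ℝ} (hθ0 : 0 ≤ θ) (hθ1 : θ ≤ 1) (hc : 0 ≤ c) (hc1 : c ≤ 1) :
    g θ c ≤ 1 := by
  rcases eq_or_lt_of_le hc with h | h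
  · simp [g, ← h]
  · rw [g, div_le_one (lt_of_lt_of_le h (denom_ge hθ0 hθ1 h.le hc1))]
    nlinarith

lemma g_mono {θ c₁ c₂ : ℝ} (hθ0 : 0 ≤ θ) (hθ1 : θ ≤ 1) (h0 : 0 ≤ c₁) (h12 : c₁ ≤ c₂)
    (h2 : c₂ ≤ 1) : g θ c₁ ≤ g θ c₂ := by
  rcases eq_or_lt_of_le h0 with h | h
  · rw [← h, g_zero]; exact g_nonneg hθ0 hθ1 (h0.trans h12)
  · have d1 : 0 < θ * c₁ + 1 - θ := lt_of_lt_of_le h (denom_ge hθ0 hθ1 h.le (h12.trans h2))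
    have d2 : 0 < θ * c₂ + 1 - θ :=
      lt_of_lt_of_le (h.trans_le h12) (denom_ge hθ0 hθ1 (h.trans_le h12).le h2)
    rw [g, g, div_le_div_iff₀ d1 d2]; nlinarith

lemma g_lip {θ θ' c : ℝ} (hθ0 : 0 ≤ θ) (hθ1 : θ ≤ 1) (hθ'0 : 0 ≤ θ') (hθ'1 : θ' ≤ 1)
    (hc : 0 < c) (hc1 : c ≤ 1) : |g θ c - g θ' c| ≤ |θ - θ'| / c := by
  have hD : c ≤ θ * c + 1 - θ := denom_ge hθ0 hθ1 hc.le hc1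
  have hD' : c ≤ θ' * c + 1 - θ' := denom_ge hθ'0 hθ'1 hc.le hc1
  have hDpos : 0 < θ * c + 1 - θ := hc.trans_le hD
  have hD'pos : 0 < θ' * c + 1 - θ' := hc.trans_le hD'
  rw [g, g, div_sub_div _ _ hDpos.ne' hD'pos.ne']
  have key : c * (θ' * c + 1 - θ') - (θ * c + 1 - θ) * c = c * ((θ - θ') * (1 - c)) := by ring
  rw [key, abs_div, abs_mul, abs_mul, abs_of_nonneg hc.le,
    abs_of_nonneg (by linarith : (0:ℝ) ≤ 1 - c),
    abs_of_pos (by positivity : 0 < (θ * c + 1 - θ) * (θ' * c + 1 - θ'))]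
  rw [div_le_div_iff₀ (by positivity) hc]
  have habs : 0 ≤ |θ - θ'| := abs_nonneg _
  nlinarith [mul_le_mul hD hD' hc.le (hc.le.trans hD), mul_nonneg habs (sq_nonneg c)]

section CDF
variable {α : Type*} [Fintype α] [LinearOrder α] (P : α → ℝ)

lemma cdf_eq (i : α) : cdf P i = P i + cdfLt P i := by
  have h : Finset.univ.filter (fun j => j ≤ i)
      = insert i (Finset.univ.filter (fun j => j < i)) := by
    ext j; simp [le_iff_lt_or_eq, or_comm]
  rw [cdf, h, Finset.sum_insert (by simp), cdfLt]

lemma cdfLt_nonneg (hP : ∀ i, 0 ≤ P i) (i : α) : 0 ≤ cdfLt P i :=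
  Finset.sum_nonneg fun j _ => hP j

lemma cdf_le_one (hP : IsPMF P) (i : α) : cdf P i ≤ 1 := by
  rw [← hP.2]
  exact Finset.sum_le_sum_of_subset_of_nonneg (Finset.filter_subset _ _) fun j _ _ => hP.1 j

lemma cdfLt_le_one (hP : IsPMF P) (i : α) : cdfLt P i ≤ 1 := by
  rw [← hP.2]
  exact Finset.sum_le_sum_of_subset_of_nonneg (Finset.filter_subset _ _) fun j _ _ => hP.1 j

lemma splitV_eq' (θ : ℝ) (i : α) : splitV P θ i = g θ (cdf P i) - g θ (cdfLt P i) := rfl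

lemma sum_splitV [Nonempty α] (hP : IsPMF P) (θ : ℝ) : ∑ v, splitV P θ v = 1 := by
  classical
  set n := Fintype.card α with hn
  let e := monoEquivOfFin α hn.symm
  set c : ℕ → ℝ := fun k => ∑ j ∈ Finset.univ.filter (fun j : Fin n => (j : ℕ) < k), P (e j)
    with hc
  have hcdf : ∀ j : Fin n, cdf P (e j) = c ((j : ℕ) + 1) := by
    intro j
    rw [cdf, Finset.sum_filter]
    simp only [hc]
    rw [Finset.sum_filter]
    refine (Fintype.sum_equiv e.toEquiv _ _ fun i => ?_).symm
    have : ((i : ℕ) < (j : ℕ) + 1) ↔ (e i ≤ e j) := by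
      rw [Nat.lt_succ_iff, e.le_iff_le]; exact Iff.rfl
    simp only [this]
    congr 1
  have hcdfLt : ∀ j : Fin n, cdfLt P (e j) = c (j : ℕ) := by
    intro j
    rw [cdfLt, Finset.sum_filter]
    simp only [hc]
    rw [Finset.sum_filter]
    refine (Fintype.sum_equiv e.toEquiv _ _ fun i => ?_).symm
    have : ((i : ℕ) < (j : ℕ)) ↔ (e i < e j) := by
      rw [e.lt_iff_lt]; exact Iff.rfl
    simp only [this]
    congr 1
  have hc0 : c 0 = 0 := by simp [hc]
  have hcn : c n = 1 := by
    rw [hc, ← hP.2]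
    simp only [Fin.is_lt, Finset.filter_true, Finset.filter_true_of_mem (fun _ _ => Fin.is_lt _)]
    exact Fintype.sum_equiv e.toEquiv _ _ fun i => rfl
  calc ∑ v, splitV P θ v = ∑ j : Fin n, splitV P θ (e j) :=
        (Fintype.sum_equiv e.toEquiv _ _ fun i => rfl).symm
    _ = ∑ j : Fin n, (g θ (c ((j : ℕ) + 1)) - g θ (c (j : ℕ))) := by
        refine Finset.sum_congr rfl fun j _ => ?_
        rw [splitV_eq', hcdf j, hcdfLt j]
    _ = ∑ k ∈ Finset.range n, (g θ (c (k + 1)) - g θ (c k)) :=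
        Fin.sum_univ_eq_sum_range (fun k => g θ (c (k + 1)) - g θ (c k)) n
    _ = g θ (c n) - g θ (c 0) := Finset.sum_range_sub (fun k => g θ (c k)) n
    _ = 1 := by rw [hc0, hcn, g_zero, sub_zero, g]; norm_num

end CDF

section BotCDF
variable {α : Type*} [Fintype α] [LinearOrder α] [OrderBot α] (P : α → ℝ)

lemma bot_le_cdf (hP : ∀ i, 0 ≤ P i) (i : α) : P ⊥ ≤ cdf P i :=
  Finset.single_le_sum (fun j _ => hP j) (by simp)

lemma bot_le_cdfLt (hP : ∀ i, 0 ≤ P i) {i : α} (h : i ≠ ⊥) : P ⊥ ≤ cdfLt P i :=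
  Finset.single_le_sum (fun j _ => hP j) (by simp [bot_lt_iff_ne_bot, h])

lemma cdfLt_bot : cdfLt P ⊥ = 0 := by
  rw [cdfLt, Finset.filter_false_of_mem (fun j _ => not_lt_bot), Finset.sum_empty]

end BotCDF

lemma normA {A' B E : Type*} [Fintype A'] [DecidableEq A'] [Fintype B] [Fintype E]
    (ζ : A' → ℂ) (hζ : ∑ x, Complex.normSq (ζ x) = 1)
    (V : Matrix (B × E) A' ℂ) (hV : Vᴴ * V = 1) :
    ∑ be : B × E, (starRingEnd ℂ) (∑ x, V be x * ζ x) * (∑ x, V be x * ζ x) = 1 := by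
  classical
  have key : ∀ x y : A', (∑ be : B × E, (starRingEnd ℂ) (V be x) * V be y)
      = if x = y then 1 else 0 := by
    intro x y
    have h := congrFun (congrFun hV x) y
    simpa [Matrix.mul_apply, Matrix.conjTranspose_apply, Matrix.one_apply] using h
  calc ∑ be : B × E, (starRingEnd ℂ) (∑ x, V be x * ζ x) * (∑ x, V be x * ζ x)
      = ∑ be : B × E, ∑ x, ∑ y, ((starRingEnd ℂ) (ζ x) * ζ y) *
          ((starRingEnd ℂ) (V be x) * V be y) := by
        refine Finset.sum_congr rfl fun be _ => ?_
        rw [map_sum, Finset.sum_mul_sum]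
        refine Finset.sum_congr rfl fun x _ => Finset.sum_congr rfl fun y _ => ?_
        rw [_root_.map_mul]; ring
    _ = ∑ x, ∑ y, ((starRingEnd ℂ) (ζ x) * ζ y) *
          ∑ be : B × E, (starRingEnd ℂ) (V be x) * V be y := by
        rw [Finset.sum_comm]
        refine Finset.sum_congr rfl fun x _ => ?_
        rw [Finset.sum_comm]
        refine Finset.sum_congr rfl fun y _ => ?_
        rw [Finset.mul_sum]
    _ = ∑ x, (starRingEnd ℂ) (ζ x) * ζ x := by
        refine Finset.sum_congr rfl fun x _ => ?_
        simp [key, mul_ite]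
    _ = 1 := by
        have h : ∀ x, (starRingEnd ℂ) (ζ x) * ζ x = (Complex.normSq (ζ x) : ℂ) := by
          intro x; rw [mul_comm, Complex.mul_conj]
        rw [Finset.sum_congr rfl fun x _ => h x, ← Complex.ofReal_sum, hζ]
        norm_num

lemma sqrt_key {a b : ℝ} (ha : 0 ≤ a) (hb : 0 ≤ b) :
    a + b - 2 * (Real.sqrt a * Real.sqrt b) ≤ |a - b| := by
  rcases le_total a b with h | h
  · rw [abs_of_nonpos (by linarith)]
    have h1 : Real.sqrt a ≤ Real.sqrt b := Real.sqrt_le_sqrt h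
    nlinarith [Real.mul_self_sqrt ha, mul_le_mul_of_nonneg_left h1 (Real.sqrt_nonneg a)]
  · rw [abs_of_nonneg (by linarith)]
    have h1 : Real.sqrt b ≤ Real.sqrt a := Real.sqrt_le_sqrt h
    nlinarith [Real.mul_self_sqrt hb, mul_le_mul_of_nonneg_left h1 (Real.sqrt_nonneg b)]

lemma sqrt_amgm {a b : ℝ} (ha : 0 ≤ a) (hb : 0 ≤ b) :
    Real.sqrt a * Real.sqrt b ≤ (a + b) / 2 := by
  nlinarith [sq_nonneg (Real.sqrt a - Real.sqrt b), Real.sq_sqrt ha, Real.sq_sqrt hb]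

end SplitAux

open QIT in
/-- Continuity of the split control state in the splitting parameter:
with `|Ω'(θ)⟩ = U_N U_split(θ) |Ω⟩`, there is a constant `C` (depending only on `P_A`)
such that `|θ − θ'| ≤ δ` implies `P(Ω'(θ), Ω'(θ')) ≤ C √δ`. -/
theorem split_state_continuity
    {α A' B E : Type*} [Fintype α] [LinearOrder α] [OrderBot α]
    [Fintype A'] [DecidableEq A'] [Fintype B] [DecidableEq B] [Fintype E] [DecidableEq E]
    (P : α → ℝ) (hP : IsPMF P) (hfull : ∀ i, 0 < P i)
    (ζ : α → A' → ℂ) (hζ : ∀ a, UnitVec (ζ a))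
    (N : Matrix A' A' ℂ → Matrix B B ℂ) (hN : IsCPTP N)
    (V : Matrix (B × E) A' ℂ) (hV : IsStinespring N V) :
    ∃ C : ℝ,
      ∀ δ : ℝ, 0 ≤ δ →
        ∀ θ ∈ Set.Icc (0:ℝ) 1, ∀ θ' ∈ Set.Icc (0:ℝ) 1, |θ - θ'| ≤ δ →
          pureDist
            (fun q : (α × α) × (B × E) =>
              ((Real.sqrt (splitU P θ q.1.1 * splitV P θ q.1.2) : ℝ) : ℂ) *
                ∑ x, V q.2 x * ζ (max q.1.1 q.1.2) x)
            (fun q : (α × α) × (B × E) =>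
              ((Real.sqrt (splitU P θ' q.1.1 * splitV P θ' q.1.2) : ℝ) : ℂ) *
                ∑ x, V q.2 x * ζ (max q.1.1 q.1.2) x)
            ≤ C * Real.sqrt δ := by
  classical
  haveI : Nonempty α := ⟨⊥⟩
  obtain ⟨hPnn, hPsum⟩ := hP
  have hm0 : 0 < P ⊥ := hfull ⊥
  have hPle1 : ∀ i, P i ≤ 1 := fun i => by
    rw [← hPsum]; exact Finset.single_le_sum (fun j _ => hPnn j) (Finset.mem_univ i)
  set m : ℝ := P ⊥ with hm
  set K : ℝ := (Fintype.card (α × α) : ℝ) * (1 + 2 / m) with hK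
  have hK0 : 0 ≤ K := by positivity
  refine ⟨Real.sqrt K, ?_⟩
  intro δ hδ θ hθ θ' hθ' hd
  obtain ⟨hθ0, hθ1⟩ := hθ
  obtain ⟨hθ'0, hθ'1⟩ := hθ'
  -- basic splitU facts
  have hU0 : ∀ t : ℝ, 0 ≤ t → t ≤ 1 → ∀ u : α, 0 ≤ splitU P t u := by
    intro t ht0 ht1 u
    unfold splitU
    have := hPnn u
    split <;> nlinarith
  have hU1 : ∀ t : ℝ, 0 ≤ t → t ≤ 1 → ∀ u : α, splitU P t u ≤ 1 := by
    intro t ht0 ht1 u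
    unfold splitU
    have h1 := hPnn u; have h2 := hPle1 u
    split <;> nlinarith
  have hUd : ∀ u : α, |splitU P θ u - splitU P θ' u| ≤ |θ - θ'| := by
    intro u
    have h1 := hPnn u; have h2 := hPle1 u
    by_cases hu : u = ⊥
    · have hr : splitU P θ u - splitU P θ' u = (θ - θ') * (P u - 1) := by
        simp only [splitU, if_pos hu]; ring
      rw [hr, abs_mul]
      calc |θ - θ'| * |P u - 1| ≤ |θ - θ'| * 1 := by
            refine mul_le_mul_of_nonneg_left ?_ (abs_nonneg _)
            rw [abs_le]; constructor <;> linarith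
        _ = |θ - θ'| := mul_one _
    · have hr : splitU P θ u - splitU P θ' u = (θ - θ') * P u := by
        simp only [splitU, if_neg hu]; ring
      rw [hr, abs_mul]
      calc |θ - θ'| * |P u| ≤ |θ - θ'| * 1 := by
            refine mul_le_mul_of_nonneg_left ?_ (abs_nonneg _)
            rw [abs_le]; constructor <;> linarith
        _ = |θ - θ'| := mul_one _
  -- basic splitV facts
  have hcdfm : ∀ i : α, m ≤ cdf P i := fun i => SplitAux.bot_le_cdf P hPnn i
  have hcdfpos : ∀ i : α, 0 < cdf P i := fun i => lt_of_lt_of_le hm0 (hcdfm i)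
  have hcdf1 : ∀ i : α, cdf P i ≤ 1 := SplitAux.cdf_le_one P ⟨hPnn, hPsum⟩
  have hcdfLt0 : ∀ i : α, 0 ≤ cdfLt P i := SplitAux.cdfLt_nonneg P hPnn
  have hcdfLt1 : ∀ i : α, cdfLt P i ≤ 1 := SplitAux.cdfLt_le_one P ⟨hPnn, hPsum⟩
  have hcdfLtle : ∀ i : α, cdfLt P i ≤ cdf P i := by
    intro i; rw [SplitAux.cdf_eq]; have := hPnn i; linarith
  have hV0 : ∀ t : ℝ, 0 ≤ t → t ≤ 1 → ∀ v : α, 0 ≤ splitV P t v := by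
    intro t ht0 ht1 v
    rw [SplitAux.splitV_eq', sub_nonneg]
    exact SplitAux.g_mono ht0 ht1 (hcdfLt0 v) (hcdfLtle v) (hcdf1 v)
  have hV1 : ∀ t : ℝ, 0 ≤ t → t ≤ 1 → ∀ v : α, splitV P t v ≤ 1 := by
    intro t ht0 ht1 v
    rw [SplitAux.splitV_eq']
    have h1 := SplitAux.g_le_one ht0 ht1 (le_of_lt (hcdfpos v)) (hcdf1 v)
    have h2 := SplitAux.g_nonneg ht0 ht1 (hcdfLt0 v)
    linarith
  have hVd : ∀ v : α, |splitV P θ v - splitV P θ' v| ≤ 2 * |θ - θ'| / m := by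
    intro v
    rw [SplitAux.splitV_eq', SplitAux.splitV_eq']
    have hA : |SplitAux.g θ (cdf P v) - SplitAux.g θ' (cdf P v)| ≤ |θ - θ'| / m := by
      calc |SplitAux.g θ (cdf P v) - SplitAux.g θ' (cdf P v)| ≤ |θ - θ'| / cdf P v :=
            SplitAux.g_lip hθ0 hθ1 hθ'0 hθ'1 (hcdfpos v) (hcdf1 v)
        _ ≤ |θ - θ'| / m := by gcongr; exact hcdfm v
    have hB : |SplitAux.g θ (cdfLt P v) - SplitAux.g θ' (cdfLt P v)| ≤ |θ - θ'| / m := by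
      by_cases hv : v = ⊥
      · rw [hv, SplitAux.cdfLt_bot, SplitAux.g_zero, SplitAux.g_zero, sub_zero, abs_zero]
        positivity
      · have hpos : 0 < cdfLt P v := lt_of_lt_of_le hm0 (SplitAux.bot_le_cdfLt P hPnn hv)
        calc |SplitAux.g θ (cdfLt P v) - SplitAux.g θ' (cdfLt P v)| ≤ |θ - θ'| / cdfLt P v :=
              SplitAux.g_lip hθ0 hθ1 hθ'0 hθ'1 hpos (hcdfLt1 v)
          _ ≤ |θ - θ'| / m := by gcongr; exact SplitAux.bot_le_cdfLt P hPnn hv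
    calc |SplitAux.g θ (cdf P v) - SplitAux.g θ (cdfLt P v) -
            (SplitAux.g θ' (cdf P v) - SplitAux.g θ' (cdfLt P v))|
        = |(SplitAux.g θ (cdf P v) - SplitAux.g θ' (cdf P v)) -
            (SplitAux.g θ (cdfLt P v) - SplitAux.g θ' (cdfLt P v))| := by ring_nf
      _ ≤ |SplitAux.g θ (cdf P v) - SplitAux.g θ' (cdf P v)| +
            |SplitAux.g θ (cdfLt P v) - SplitAux.g θ' (cdfLt P v)| := abs_sub _ _
      _ ≤ |θ - θ'| / m + |θ - θ'| / m := add_le_add hA hB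
      _ = 2 * |θ - θ'| / m := by ring
  -- sums
  have hUsum : ∀ t : ℝ, ∑ u, splitU P t u = 1 := by
    intro t
    unfold splitU
    rw [Finset.sum_add_distrib, ← Finset.mul_sum, hPsum]
    have h : (∑ x : α, @ite ℝ (x = ⊥) (Classical.propDecidable _) (1 - t) 0) = 1 - t := by
      rw [Finset.sum_eq_single
        (f := fun x : α => @ite ℝ (x = ⊥) (Classical.propDecidable _) (1 - t) 0)
        (⊥ : α) (fun b _ hb => if_neg hb)
        (fun hb => absurd (Finset.mem_univ _) hb), if_pos rfl]
    rw [h]; ring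
  have hVsum : ∀ t : ℝ, ∑ v, splitV P t v = 1 := fun t =>
    SplitAux.sum_splitV P ⟨hPnn, hPsum⟩ t
  have hssum : ∀ t : ℝ, ∑ p : α × α, splitU P t p.1 * splitV P t p.2 = 1 := by
    intro t
    rw [Fintype.sum_prod_type, ← Finset.sum_mul_sum, hUsum, hVsum, mul_one]
  have hs0 : ∀ t : ℝ, 0 ≤ t → t ≤ 1 → ∀ p : α × α, 0 ≤ splitU P t p.1 * splitV P t p.2 :=
    fun t ht0 ht1 p => mul_nonneg (hU0 t ht0 ht1 p.1) (hV0 t ht0 ht1 p.2)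
  set z : ℝ := ∑ p : α × α, Real.sqrt (splitU P θ p.1 * splitV P θ p.2) *
      Real.sqrt (splitU P θ' p.1 * splitV P θ' p.2) with hz
  -- the inner product equals z
  have hinner : (∑ q : (α × α) × (B × E),
      (starRingEnd ℂ) (((Real.sqrt (splitU P θ q.1.1 * splitV P θ q.1.2) : ℝ) : ℂ) *
          ∑ x, V q.2 x * ζ (max q.1.1 q.1.2) x) *
        (((Real.sqrt (splitU P θ' q.1.1 * splitV P θ' q.1.2) : ℝ) : ℂ) *
          ∑ x, V q.2 x * ζ (max q.1.1 q.1.2) x)) = (z : ℂ) := by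
    rw [Fintype.sum_prod_type]
    have step : ∀ p : α × α, (∑ be : B × E,
        (starRingEnd ℂ) (((Real.sqrt (splitU P θ p.1 * splitV P θ p.2) : ℝ) : ℂ) *
            ∑ x, V be x * ζ (max p.1 p.2) x) *
          (((Real.sqrt (splitU P θ' p.1 * splitV P θ' p.2) : ℝ) : ℂ) *
            ∑ x, V be x * ζ (max p.1 p.2) x))
        = ((Real.sqrt (splitU P θ p.1 * splitV P θ p.2) *
            Real.sqrt (splitU P θ' p.1 * splitV P θ' p.2) : ℝ) : ℂ) := by
      intro p
      have e1 : ∀ be : B × E,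
          (starRingEnd ℂ) (((Real.sqrt (splitU P θ p.1 * splitV P θ p.2) : ℝ) : ℂ) *
              ∑ x, V be x * ζ (max p.1 p.2) x) *
            (((Real.sqrt (splitU P θ' p.1 * splitV P θ' p.2) : ℝ) : ℂ) *
              ∑ x, V be x * ζ (max p.1 p.2) x)
          = ((Real.sqrt (splitU P θ p.1 * splitV P θ p.2) *
              Real.sqrt (splitU P θ' p.1 * splitV P θ' p.2) : ℝ) : ℂ) *
            ((starRingEnd ℂ) (∑ x, V be x * ζ (max p.1 p.2) x) *
              (∑ x, V be x * ζ (max p.1 p.2) x)) := by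
        intro be
        rw [_root_.map_mul, Complex.conj_ofReal]
        push_cast
        ring
      rw [Finset.sum_congr rfl fun be _ => e1 be, ← Finset.mul_sum,
        SplitAux.normA (ζ (max p.1 p.2)) (hζ (max p.1 p.2)) V hV.1, mul_one]
    rw [Finset.sum_congr rfl fun p _ => step p, hz]
    push_cast
    rfl
  -- z bounds
  have hz1 : z ≤ 1 := by
    rw [hz]
    calc ∑ p : α × α, Real.sqrt (splitU P θ p.1 * splitV P θ p.2) *
          Real.sqrt (splitU P θ' p.1 * splitV P θ' p.2)
        ≤ ∑ p : α × α, (splitU P θ p.1 * splitV P θ p.2 +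
            splitU P θ' p.1 * splitV P θ' p.2) / 2 :=
          Finset.sum_le_sum fun p _ =>
            SplitAux.sqrt_amgm (hs0 θ hθ0 hθ1 p) (hs0 θ' hθ'0 hθ'1 p)
      _ = 1 := by
          rw [← Finset.sum_div, Finset.sum_add_distrib, hssum θ, hssum θ']
          norm_num
  have hpointwise : ∀ p : α × α,
      |splitU P θ p.1 * splitV P θ p.2 - splitU P θ' p.1 * splitV P θ' p.2|
        ≤ (1 + 2 / m) * δ := by
    intro p
    have hrw : splitU P θ p.1 * splitV P θ p.2 - splitU P θ' p.1 * splitV P θ' p.2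
        = (splitU P θ p.1 - splitU P θ' p.1) * splitV P θ p.2 +
          splitU P θ' p.1 * (splitV P θ p.2 - splitV P θ' p.2) := by ring
    rw [hrw]
    have hVabs : |splitV P θ p.2| ≤ 1 := by
      rw [abs_of_nonneg (hV0 θ hθ0 hθ1 p.2)]; exact hV1 θ hθ0 hθ1 p.2
    have hUabs : |splitU P θ' p.1| ≤ 1 := by
      rw [abs_of_nonneg (hU0 θ' hθ'0 hθ'1 p.1)]; exact hU1 θ' hθ'0 hθ'1 p.1
    have hdm : 2 * |θ - θ'| / m ≤ 2 * δ / m := by gcongr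
    calc |(splitU P θ p.1 - splitU P θ' p.1) * splitV P θ p.2 +
          splitU P θ' p.1 * (splitV P θ p.2 - splitV P θ' p.2)|
        ≤ |(splitU P θ p.1 - splitU P θ' p.1) * splitV P θ p.2| +
          |splitU P θ' p.1 * (splitV P θ p.2 - splitV P θ' p.2)| := abs_add_le _ _
      _ = |splitU P θ p.1 - splitU P θ' p.1| * |splitV P θ p.2| +
          |splitU P θ' p.1| * |splitV P θ p.2 - splitV P θ' p.2| := by
            rw [abs_mul, abs_mul]
      _ ≤ |θ - θ'| * 1 + 1 * (2 * |θ - θ'| / m) := by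
            refine add_le_add (mul_le_mul (hUd p.1) hVabs (abs_nonneg _) (abs_nonneg _)) ?_
            exact mul_le_mul hUabs (hVd p.2) (abs_nonneg _) zero_le_one
      _ ≤ δ * 1 + 1 * (2 * δ / m) := by
            refine add_le_add (by linarith) (by linarith)
      _ = (1 + 2 / m) * δ := by field_simp
  have hz2 : 2 - 2 * z ≤ K * δ := by
    have h1 : 2 - 2 * z = ∑ p : α × α, (splitU P θ p.1 * splitV P θ p.2 +
        splitU P θ' p.1 * splitV P θ' p.2 -
        2 * (Real.sqrt (splitU P θ p.1 * splitV P θ p.2) *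
          Real.sqrt (splitU P θ' p.1 * splitV P θ' p.2))) := by
      rw [Finset.sum_sub_distrib, Finset.sum_add_distrib, hssum θ, hssum θ',
        ← Finset.mul_sum, ← hz]
      ring
    have h2 : ∑ p : α × α, (splitU P θ p.1 * splitV P θ p.2 +
        splitU P θ' p.1 * splitV P θ' p.2 -
        2 * (Real.sqrt (splitU P θ p.1 * splitV P θ p.2) *
          Real.sqrt (splitU P θ' p.1 * splitV P θ' p.2)))
        ≤ ∑ p : α × α, |splitU P θ p.1 * splitV P θ p.2 -
            splitU P θ' p.1 * splitV P θ' p.2| :=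
      Finset.sum_le_sum fun p _ => SplitAux.sqrt_key (hs0 θ hθ0 hθ1 p) (hs0 θ' hθ'0 hθ'1 p)
    have h3 : ∑ p : α × α, |splitU P θ p.1 * splitV P θ p.2 -
        splitU P θ' p.1 * splitV P θ' p.2| ≤ K * δ := by
      calc ∑ p : α × α, |splitU P θ p.1 * splitV P θ p.2 -
            splitU P θ' p.1 * splitV P θ' p.2|
          ≤ ∑ _p : α × α, (1 + 2 / m) * δ := Finset.sum_le_sum fun p _ => hpointwise p
        _ = K * δ := by
            rw [Finset.sum_const, Finset.card_univ, nsmul_eq_mul, hK]; ring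
    linarith
  have hfinal : 1 - z ^ 2 ≤ K * δ := by nlinarith [sq_nonneg (1 - z)]
  -- conclude
  show Real.sqrt (1 - ‖∑ i : (α × α) × (B × E), _‖ ^ 2) ≤ _
  rw [hinner, Complex.norm_real, Real.norm_eq_abs, sq_abs]
  calc Real.sqrt (1 - z ^ 2) ≤ Real.sqrt (K * δ) := Real.sqrt_le_sqrt hfinal
    _ = Real.sqrt K * Real.sqrt δ := Real.sqrt_mul hK0 δ
end
end

section
/- Continuity of the second split distribution: Let P_A be a probability distribution with full support on a finite totally ordered set 𝒜, and set p* := min_{i∈𝒜} P_A(i) > 0. For θ ∈ [0,1] let F_U^θ(i) := θ F_A(i) + 1 − θ and let P_V^θ be the distribution with cumulative distribution function F_V^θ(i) := F_A(i)/F_U^θ(i). Then there exists an absolute constant c such that for all θ, θ' ∈ [0,1] and every i ∈ 𝒜, |P_V^θ(i) − P_V^{θ'}(i)| ≤ c · P_A(i) · |θ − θ'| / (p*)⁴; consequently ‖P_V^θ − P_V^{θ'}‖₁ ≤ c|θ − θ'|/(p*)⁴. -/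
noncomputable section
open scoped BigOperators
open MeasureTheory Kronecker Matrix
open scoped ComplexOrder
attribute [local instance] Classical.propDecidable

set_option maxHeartbeats 2000000 in
lemma splitV_key (θ θ' G Pi p : ℝ) (hθ0 : 0 ≤ θ) (hθ1 : θ ≤ 1)
    (hθ'0 : 0 ≤ θ') (hθ'1 : θ' ≤ 1) (hp0 : 0 < p) (hG0 : 0 ≤ G)
    (hpP : p ≤ Pi) (hF1 : G + Pi ≤ 1) (hG : p ≤ G ∨ G = 0) :
    |((G + Pi)/(θ*(G+Pi)+1-θ) - G/(θ*G+1-θ)) -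
      ((G + Pi)/(θ'*(G+Pi)+1-θ') - G/(θ'*G+1-θ'))| ≤ 3*Pi*|θ-θ'|/p^4 := by
  have hp1 : p ≤ 1 := by nlinarith
  have hPi0 : 0 ≤ Pi := le_trans hp0.le hpP
  rcases hG with hGp | hG0'
  · -- main case : p ≤ G
    set F := G + Pi with hF
    have hFp : p ≤ F := by simp only [hF]; nlinarith
    have hF0 : 0 ≤ F := le_trans hp0.le hFp
    have hG1 : G ≤ 1 := by nlinarith
    have hD1l : p ≤ θ*F+1-θ := by nlinarith
    have hD2l : p ≤ θ*G+1-θ := by nlinarith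
    have hD3l : p ≤ θ'*F+1-θ' := by nlinarith
    have hD4l : p ≤ θ'*G+1-θ' := by nlinarith
    have hD1u : θ*F+1-θ ≤ 1 := by nlinarith
    have hD2u : θ*G+1-θ ≤ 1 := by nlinarith
    have hD3u : θ'*F+1-θ' ≤ 1 := by nlinarith
    have hD4u : θ'*G+1-θ' ≤ 1 := by nlinarith
    have hD1p : (0:ℝ) < θ*F+1-θ := lt_of_lt_of_le hp0 hD1l
    have hD2p : (0:ℝ) < θ*G+1-θ := lt_of_lt_of_le hp0 hD2l
    have hD3p : (0:ℝ) < θ'*F+1-θ' := lt_of_lt_of_le hp0 hD3l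
    have hD4p : (0:ℝ) < θ'*G+1-θ' := lt_of_lt_of_le hp0 hD4l
    have e : (F/(θ*F+1-θ) - G/(θ*G+1-θ)) - (F/(θ'*F+1-θ') - G/(θ'*G+1-θ')) =
        (θ-θ') * (F*(1-F)*((θ*G+1-θ)*(θ'*G+1-θ')) - G*(1-G)*((θ*F+1-θ)*(θ'*F+1-θ')))
          / ((θ*F+1-θ)*((θ*G+1-θ)*((θ'*F+1-θ')*(θ'*G+1-θ')))) := by
      rw [div_sub_div _ _ hD1p.ne' hD2p.ne', div_sub_div _ _ hD3p.ne' hD4p.ne',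
        div_sub_div _ _ (mul_ne_zero hD1p.ne' hD2p.ne') (mul_ne_zero hD3p.ne' hD4p.ne'),
        div_eq_div_iff (mul_ne_zero (mul_ne_zero hD1p.ne' hD2p.ne') (mul_ne_zero hD3p.ne' hD4p.ne'))
          (mul_ne_zero hD1p.ne' (mul_ne_zero hD2p.ne' (mul_ne_zero hD3p.ne' hD4p.ne')))]
      ring
    have hDp : (0:ℝ) < (θ*F+1-θ)*((θ*G+1-θ)*((θ'*F+1-θ')*(θ'*G+1-θ'))) := by positivity
    rw [e, abs_div, abs_mul, abs_of_pos hDp]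
    -- bound the numerator polynomial
    have hX : |F*(1-F) - G*(1-G)| ≤ Pi := by
      rw [abs_le]; constructor <;> nlinarith
    have hY : |(θ*G+1-θ)*(θ'*G+1-θ') - (θ*F+1-θ)*(θ'*F+1-θ')| ≤ 2*Pi := by
      have hrepr : (θ*G+1-θ)*(θ'*G+1-θ') - (θ*F+1-θ)*(θ'*F+1-θ') =
          -(Pi*(θ*(θ'*G+1-θ') + θ'*(θ*F+1-θ))) := by
        simp only [hF]; ring
      rw [hrepr, abs_neg]
      have h1 : 0 ≤ θ*(θ'*G+1-θ') := mul_nonneg hθ0 hD4p.le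
      have h2 : 0 ≤ θ'*(θ*F+1-θ) := mul_nonneg hθ'0 hD1p.le
      have h3 : θ*(θ'*G+1-θ') ≤ 1 := by nlinarith
      have h4 : θ'*(θ*F+1-θ) ≤ 1 := by nlinarith
      rw [abs_of_nonneg (by positivity)]
      nlinarith
    have hM : |F*(1-F)*((θ*G+1-θ)*(θ'*G+1-θ')) - G*(1-G)*((θ*F+1-θ)*(θ'*F+1-θ'))| ≤ 3*Pi := by
      have habs : F*(1-F)*((θ*G+1-θ)*(θ'*G+1-θ')) - G*(1-G)*((θ*F+1-θ)*(θ'*F+1-θ')) =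
          (F*(1-F) - G*(1-G)) * ((θ*G+1-θ)*(θ'*G+1-θ')) +
            (G*(1-G)) * ((θ*G+1-θ)*(θ'*G+1-θ') - (θ*F+1-θ)*(θ'*F+1-θ')) := by ring
      have hD24u : (θ*G+1-θ)*(θ'*G+1-θ') ≤ 1 := by nlinarith
      have hD24l : 0 ≤ (θ*G+1-θ)*(θ'*G+1-θ') := by positivity
      have hGG : 0 ≤ G*(1-G) := mul_nonneg hG0 (by nlinarith)
      have hGG1 : G*(1-G) ≤ 1 := by nlinarith
      calc |F*(1-F)*((θ*G+1-θ)*(θ'*G+1-θ')) - G*(1-G)*((θ*F+1-θ)*(θ'*F+1-θ'))|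
          ≤ |(F*(1-F) - G*(1-G)) * ((θ*G+1-θ)*(θ'*G+1-θ'))| +
            |(G*(1-G)) * ((θ*G+1-θ)*(θ'*G+1-θ') - (θ*F+1-θ)*(θ'*F+1-θ'))| := by
            rw [habs]; exact abs_add_le _ _
        _ = |F*(1-F) - G*(1-G)| * ((θ*G+1-θ)*(θ'*G+1-θ')) +
            (G*(1-G)) * |(θ*G+1-θ)*(θ'*G+1-θ') - (θ*F+1-θ)*(θ'*F+1-θ')| := by
            rw [abs_mul (F*(1-F) - G*(1-G)), abs_of_nonneg hD24l, abs_mul (G*(1-G)),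
              abs_of_nonneg hGG]
        _ ≤ Pi * 1 + 1 * (2*Pi) := by
            apply add_le_add
            · exact mul_le_mul hX hD24u hD24l hPi0
            · exact mul_le_mul hGG1 hY (abs_nonneg _) one_pos.le
        _ = 3*Pi := by ring
    have hp4 : p^4 ≤ (θ*F+1-θ)*((θ*G+1-θ)*((θ'*F+1-θ')*(θ'*G+1-θ'))) := by
      have h12 : p*p ≤ (θ*F+1-θ)*(θ*G+1-θ) := mul_le_mul hD1l hD2l hp0.le hD1p.le
      have h34 : p*p ≤ (θ'*F+1-θ')*(θ'*G+1-θ') := mul_le_mul hD3l hD4l hp0.le hD3p.le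
      have h1234 : (p*p)*(p*p) ≤ ((θ*F+1-θ)*(θ*G+1-θ))*((θ'*F+1-θ')*(θ'*G+1-θ')) :=
        mul_le_mul h12 h34 (by positivity) (le_trans (by positivity) h12)
      calc p^4 = (p*p)*(p*p) := by ring
        _ ≤ ((θ*F+1-θ)*(θ*G+1-θ))*((θ'*F+1-θ')*(θ'*G+1-θ')) := h1234
        _ = (θ*F+1-θ)*((θ*G+1-θ)*((θ'*F+1-θ')*(θ'*G+1-θ'))) := by ring
    have hnum : |θ-θ'| * |F*(1-F)*((θ*G+1-θ)*(θ'*G+1-θ')) - G*(1-G)*((θ*F+1-θ)*(θ'*F+1-θ'))|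
        ≤ 3*Pi*|θ-θ'| := by nlinarith [abs_nonneg (θ-θ'), abs_nonneg (F*(1-F)*((θ*G+1-θ)*(θ'*G+1-θ')) - G*(1-G)*((θ*F+1-θ)*(θ'*F+1-θ')))]
    exact div_le_div₀ (by positivity) hnum (by positivity) hp4
  · -- boundary case : G = 0
    subst hG0'
    simp only [zero_add, zero_mul, zero_div, sub_zero]
    have hFp : p ≤ Pi := hpP
    have hF1' : Pi ≤ 1 := by nlinarith
    have hD1l : p ≤ θ*Pi+1-θ := by nlinarith
    have hD3l : p ≤ θ'*Pi+1-θ' := by nlinarith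
    have hD1u : θ*Pi+1-θ ≤ 1 := by nlinarith
    have hD3u : θ'*Pi+1-θ' ≤ 1 := by nlinarith
    have hD1p : (0:ℝ) < θ*Pi+1-θ := lt_of_lt_of_le hp0 hD1l
    have hD3p : (0:ℝ) < θ'*Pi+1-θ' := lt_of_lt_of_le hp0 hD3l
    have e : Pi/(θ*Pi+1-θ) - Pi/(θ'*Pi+1-θ') =
        (θ-θ') * (Pi*(1-Pi)) / ((θ*Pi+1-θ)*(θ'*Pi+1-θ')) := by
      rw [div_sub_div _ _ hD1p.ne' hD3p.ne']
      ring
    rw [e, abs_div, abs_mul, abs_of_nonneg (by nlinarith : (0:ℝ) ≤ Pi*(1-Pi)),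
      abs_of_pos (mul_pos hD1p hD3p)]
    rw [div_le_div_iff₀ (mul_pos hD1p hD3p) (by positivity : (0:ℝ) < p^4)]
    have h12 : p*p ≤ (θ*Pi+1-θ)*(θ'*Pi+1-θ') := mul_le_mul hD1l hD3l hp0.le hD1p.le
    have hp2 : p^2 ≤ 1 := by nlinarith
    have hp42 : p^4 ≤ p^2 := by nlinarith [mul_nonneg (sq_nonneg p) (sub_nonneg.mpr hp2)]
    have key := mul_le_mul_of_nonneg_left h12 (mul_nonneg (abs_nonneg (θ-θ')) hPi0)
    nlinarith [mul_nonneg (mul_nonneg (mul_nonneg (abs_nonneg (θ-θ')) hPi0)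
        (pow_nonneg hp0.le 4)) hPi0,
      mul_nonneg (mul_nonneg (abs_nonneg (θ-θ')) hPi0) (sub_nonneg.mpr hp42),
      mul_nonneg (mul_nonneg (abs_nonneg (θ-θ')) hPi0) (sq_nonneg p)]


open QIT in
set_option maxHeartbeats 1000000 in
/-- Continuity of the second split distribution: there is an absolute
constant `c > 0` such that for every full-support pmf `P_A` on a finite totally ordered
set with `p* = min_i P_A(i)`, and all `θ, θ' ∈ [0,1]`,
`|P_V^θ(i) − P_V^{θ'}(i)| ≤ c · P_A(i) · |θ−θ'| / p*⁴` for every `i`, and consequently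
`‖P_V^θ − P_V^{θ'}‖₁ ≤ c|θ−θ'|/p*⁴`. -/
theorem splitV_continuity :
    ∃ c : ℝ, 0 < c ∧
      ∀ (α : Type) [Fintype α] [LinearOrder α] [OrderBot α] [Nonempty α] (P : α → ℝ),
        IsPMF P → (∀ i, 0 < P i) →
        ∀ θ θ' : ℝ, θ ∈ Set.Icc (0:ℝ) 1 → θ' ∈ Set.Icc (0:ℝ) 1 →
          (∀ i : α, |splitV P θ i - splitV P θ' i| ≤
              c * P i * |θ - θ'| / (Finset.univ.inf' Finset.univ_nonempty P) ^ 4) ∧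
          ∑ i : α, |splitV P θ i - splitV P θ' i| ≤
              c * |θ - θ'| / (Finset.univ.inf' Finset.univ_nonempty P) ^ 4 := by
  refine ⟨3, by norm_num, ?_⟩
  intro α _ _ _ _ P hP hpos θ θ' hθ hθ'
  have hp0 : 0 < Finset.univ.inf' Finset.univ_nonempty P :=
    (Finset.lt_inf'_iff _).mpr fun i _ => hpos i
  set p := Finset.univ.inf' Finset.univ_nonempty P with hpdef
  have hple : ∀ i : α, p ≤ P i := fun i => Finset.inf'_le _ (Finset.mem_univ i)
  have hcdfLt_nonneg : ∀ i : α, 0 ≤ cdfLt P i := fun i =>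
    Finset.sum_nonneg fun j _ => hP.1 j
  have hFG : ∀ i : α, cdf P i = cdfLt P i + P i := by
    intro i
    have h : Finset.univ.filter (fun j => j ≤ i) =
        insert i (Finset.univ.filter (fun j => j < i)) := by
      ext j
      simp [le_iff_lt_or_eq, or_comm]
    rw [cdf, cdfLt, h, Finset.sum_insert (by simp)]
    ring
  have hcdf_le1 : ∀ i : α, cdf P i ≤ 1 := fun i => by
    rw [← hP.2]
    exact Finset.sum_le_sum_of_subset_of_nonneg (Finset.filter_subset _ _)
      (fun j _ _ => hP.1 j)
  have hGbot : cdfLt P (⊥ : α) = 0 := by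
    have h : Finset.univ.filter (fun j : α => j < ⊥) = ∅ :=
      Finset.filter_eq_empty_iff.mpr fun _ _ => not_lt_bot
    rw [cdfLt, h, Finset.sum_empty]
  have hGcase : ∀ i : α, p ≤ cdfLt P i ∨ cdfLt P i = 0 := by
    intro i
    rcases (bot_le : (⊥ : α) ≤ i).lt_or_eq with h | h
    · left
      calc p ≤ P ⊥ := hple ⊥
        _ ≤ cdfLt P i := Finset.single_le_sum (fun j _ => hP.1 j) (by simp [h])
    · right
      rw [← h]
      exact hGbot
  have main : ∀ i : α, |splitV P θ i - splitV P θ' i| ≤ 3 * P i * |θ - θ'| / p ^ 4 := by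
    intro i
    have key := splitV_key θ θ' (cdfLt P i) (P i) p hθ.1 hθ.2 hθ'.1 hθ'.2 hp0
      (hcdfLt_nonneg i) (hple i) (by rw [← hFG i]; exact hcdf_le1 i) (hGcase i)
    have e1 : ∀ t : ℝ, splitV P t i =
        (cdfLt P i + P i)/(t*(cdfLt P i + P i)+1-t) - cdfLt P i/(t*cdfLt P i+1-t) := by
      intro t
      rw [splitV, hFG i]
    rw [e1 θ, e1 θ']
    calc |(cdfLt P i + P i)/(θ*(cdfLt P i + P i)+1-θ) - cdfLt P i/(θ*cdfLt P i+1-θ) -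
          ((cdfLt P i + P i)/(θ'*(cdfLt P i + P i)+1-θ') - cdfLt P i/(θ'*cdfLt P i+1-θ'))|
        ≤ 3*(P i)*|θ-θ'|/p^4 := key
      _ = 3 * P i * |θ - θ'| / p ^ 4 := by ring
  refine ⟨main, ?_⟩
  calc ∑ i : α, |splitV P θ i - splitV P θ' i| ≤ ∑ i : α, 3 * P i * |θ - θ'| / p ^ 4 :=
        Finset.sum_le_sum fun i _ => main i
    _ = ∑ i : α, (3 * |θ - θ'| / p ^ 4) * P i := by
        apply Finset.sum_congr rfl
        intro i _
        ring
    _ = (3 * |θ - θ'| / p ^ 4) * ∑ i : α, P i := by rw [Finset.mul_sum]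
    _ = 3 * |θ - θ'| / p ^ 4 := by rw [hP.2, mul_one]
end
end
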